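/- arXiv:cs/0608011 — 5 statements merged into one kernel-verified Lean document; each statement's English description precedes it below -/
import Mathlib

section
/- Every monotonic operator F on a complete lattice D is order independent: if R is a relaxation of F and α is an ordinal with R^{α+1} = R^α, then R^α equals the greatest fixpoint of F. In particular, any two outcomes of relaxations of F coincide. -/
universe u

/-- Transfinite iterations of an operator on a complete lattice:
`F^0 = ⊤`, `F^(α+1) = F (F^α)`, and `F^β = ⨅_{α<β} F^α` for limit `β`. -/
noncomputable def iterate {D : Type u} [CompleteLattice D] (F : D → D) (α : Ordinal.{0}) : D :=
  Ordinal.limitRecOn α ⊤ (fun _ ih => F ih) (fun β _ ih => ⨅ (γ : Ordinal) (h : γ < β), ih γ h)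

/-- `R` is a relaxation of `F`. -/
def Relaxation {D : Type u} [CompleteLattice D] (F R : D → D) : Prop :=
  ∀ α : Ordinal.{0},
    F (iterate R α) ≤ R (iterate R α) ∧
    (F (iterate R α) ≤ iterate R α → R (iterate R α) ≤ iterate R α) ∧
    (R (iterate R α) = iterate R α → F (iterate R α) = iterate R α)

section Games

variable {n : ℕ} {T : Fin n → Type u}

/-- `GR` operator: strategies that are a best response *in the initial game* to
some opponent belief held in `G`. -/
def GR (p : ∀ i : Fin n, (∀ j, T j) → ℝ) (G : ∀ i, Set (T i)) : ∀ i, Set (T i) :=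
  fun i => {s : T i | ∃ μ : ∀ j, T j, (∀ j, j ≠ i → μ j ∈ G j) ∧
    ∀ s' : T i, p i (Function.update μ i s') ≤ p i (Function.update μ i s)}

/-- `LR` operator: strategies that are a best response *in `G`* to
some opponent belief held in `G`. -/
def LR (p : ∀ i : Fin n, (∀ j, T j) → ℝ) (G : ∀ i, Set (T i)) : ∀ i, Set (T i) :=
  fun i => {s : T i | ∃ μ : ∀ j, T j, (∀ j, j ≠ i → μ j ∈ G j) ∧
    ∀ s' ∈ G i, p i (Function.update μ i s') ≤ p i (Function.update μ i s)}

/-- `s'` strictly dominates `s` on the restriction `G`. -/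
def Dom (p : ∀ i : Fin n, (∀ j, T j) → ℝ) (G : ∀ i, Set (T i)) (i : Fin n)
    (s' s : T i) : Prop :=
  ∀ μ : ∀ j, T j, (∀ j, j ≠ i → μ j ∈ G j) →
    p i (Function.update μ i s) < p i (Function.update μ i s')

/-- `GS` operator: strategies not strictly dominated on `G` by any strategy of the initial game. -/
def GS (p : ∀ i : Fin n, (∀ j, T j) → ℝ) (G : ∀ i, Set (T i)) : ∀ i, Set (T i) :=
  fun i => {s : T i | ¬ ∃ s' : T i, Dom p G i s' s}

/-- `LS` operator: strategies not strictly dominated on `G` by any strategy in `G`. -/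
def LS (p : ∀ i : Fin n, (∀ j, T j) → ℝ) (G : ∀ i, Set (T i)) : ∀ i, Set (T i) :=
  fun i => {s : T i | ¬ ∃ s' ∈ G i, Dom p G i s' s}

/-- Property B: to each belief in the initial game a best response (in the initial game) exists. -/
def PropB (p : ∀ i : Fin n, (∀ j, T j) → ℝ) : Prop :=
  ∀ (i : Fin n) (μ : ∀ j, T j), ∃ s : T i, ∀ s' : T i,
    p i (Function.update μ i s') ≤ p i (Function.update μ i s)

/-- Property D(α). -/
def PropD (p : ∀ i : Fin n, (∀ j, T j) → ℝ) (α : Ordinal.{0}) : Prop :=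
  ∀ R : (∀ i, Set (T i)) → (∀ i, Set (T i)), Relaxation (fun G => LS p G ⊓ G) R →
    ∀ (i : Fin n) (s : T i), (∃ s' : T i, Dom p (iterate R α) i s' s) →
      ∃ s' ∈ iterate R α i, Dom p (iterate R α) i s' s

/-- Property C(α). -/
def PropC (p : ∀ i : Fin n, (∀ j, T j) → ℝ) (α : Ordinal.{0}) : Prop :=
  ∀ R : (∀ i, Set (T i)) → (∀ i, Set (T i)), Relaxation (fun G => LS p G ⊓ G) R →
    ∀ (i : Fin n) (s : T i), (∃ s' : T i, Dom p (iterate R α) i s' s) →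
      ∃ s'' : T i, Dom p (iterate R α) i s'' s ∧ ¬ ∃ s' : T i, Dom p (iterate R α) i s' s''

end Games

set_option linter.unusedVariables false


lemma iterate_succ' {D : Type u} [CompleteLattice D] (R : D → D) (β : Ordinal.{0}) :
    iterate R (β + 1) = R (iterate R β) := by
  simp [iterate, Ordinal.limitRecOn_succ]

lemma le_iterate {D : Type u} [CompleteLattice D] (F R : D → D)
    (hmono : ∀ G₁ G₂ : D, G₁ ≤ G₂ → F G₁ ≤ F G₂)
    (hR : Relaxation F R) (G : D) (hG : F G = G) :
    ∀ β : Ordinal.{0}, G ≤ iterate R β := by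
  intro β
  induction β using Ordinal.limitRecOn with
  | zero => simp [iterate]
  | add_one β ih =>
    rw [iterate_succ']
    calc G = F G := hG.symm
    _ ≤ F (iterate R β) := hmono _ _ ih
    _ ≤ R (iterate R β) := (hR β).1
  | limit β hβ ih =>
    rw [iterate, Ordinal.limitRecOn_limit _ _ _ _ hβ]
    exact le_iInf fun γ => le_iInf fun hγ => ih γ hγ

theorem stmt_4 {D : Type u} [CompleteLattice D] (F : D → D)
    (hmono : ∀ G₁ G₂ : D, G₁ ≤ G₂ → F G₁ ≤ F G₂)
    (R : D → D) (hR : Relaxation F R) (α : Ordinal.{0})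
    (hα : iterate R (α + 1) = iterate R α) :
    IsGreatest {G : D | F G = G} (iterate R α) := by
  have hRfix : R (iterate R α) = iterate R α := by
    rw [iterate_succ'] at hα; exact hα
  have hFfix : F (iterate R α) = iterate R α := (hR α).2.2 hRfix
  exact ⟨hFfix, fun G hG => le_iterate F R hmono hR G hG α⟩
end

section
/- Consider the two-player strategic game H in which both strategy sets are T₁ = T₂ = {k : ℤ | k ≥ −1}, with payoffs: for k, ℓ ≥ 0, p₁(k, ℓ) = ℓ + 1 if k = ℓ + 1 and 0 otherwise, and p₂(k, ℓ) = k if k = ℓ and 0 otherwise; p₁(−1, ℓ) = ℓ + 1 for all ℓ ≥ −1; p₁(k, −1) = k for all k ≥ 0; p₂(k, −1) = k for all k ≥ −1; p₂(−1, ℓ) = ℓ for all ℓ ≥ 0. Then, with the pure belief structure, GR̄^ω = ({−1}, {−1}) and GR̄^{ω+1} = (∅, ∅); in particular the closure ordinal of GR̄ is strictly greater than ω. -/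
universe u

set_option linter.unusedVariables false

noncomputable def p7 (i : Fin 2) (s : ∀ _ : Fin 2, {k : ℤ // -1 ≤ k}) : ℝ :=
  ((if i = 0 then
      (if (s 0 : ℤ) = -1 then (s 1 : ℤ) + 1
       else if (s 1 : ℤ) = -1 then (s 0 : ℤ)
       else if (s 0 : ℤ) = (s 1 : ℤ) + 1 then (s 1 : ℤ) + 1 else 0)
    else
      (if (s 1 : ℤ) = -1 then (s 0 : ℤ)
       else if (s 0 : ℤ) = -1 then (s 1 : ℤ)
       else if (s 0 : ℤ) = (s 1 : ℤ) then (s 0 : ℤ) else 0) : ℤ) : ℝ)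

abbrev T7 : Type := {k : ℤ // -1 ≤ k}

def z1 (k l : ℤ) : ℤ := if k = -1 then l+1 else if l = -1 then k else if k = l+1 then l+1 else 0
def z2 (k l : ℤ) : ℤ := if l = -1 then k else if k = -1 then l else if k = l then k else 0

lemma p7_zero (s : ∀ _ : Fin 2, T7) : p7 0 s = ((z1 (s 0) (s 1) : ℤ) : ℝ) := by
  simp [p7, z1]

lemma p7_one (s : ∀ _ : Fin 2, T7) : p7 1 s = ((z2 (s 0) (s 1) : ℤ) : ℝ) := by
  simp [p7, z2]

lemma z1_br (l s : ℤ) (hl : -1 ≤ l) (hs : -1 ≤ s) :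
    (∀ s' : ℤ, -1 ≤ s' → z1 s' l ≤ z1 s l) ↔ (0 ≤ l ∧ (s = -1 ∨ s = l + 1)) := by
  constructor
  · intro h
    have h1 := h (s+2) (by omega)
    have h2 := h (-1) (by omega)
    simp only [z1] at h1 h2
    split_ifs at h1 h2 <;> omega
  · rintro ⟨h0, hcase⟩ s' hs'
    simp only [z1]
    split_ifs <;> omega

lemma z2_br (k s : ℤ) (hk : -1 ≤ k) (hs : -1 ≤ s) :
    (∀ s' : ℤ, -1 ≤ s' → z2 k s' ≤ z2 k s) ↔ (0 ≤ k ∧ (k = 0 ∨ s = -1 ∨ s = k)) := by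
  constructor
  · intro h
    have h1 := h (s+2) (by omega)
    have h2 := h (-1) (by omega)
    simp only [z2] at h1 h2
    split_ifs at h1 h2 <;> omega
  · rintro ⟨h0, hcase⟩ s' hs'
    simp only [z2]
    split_ifs <;> omega

lemma upd0_0 (μ : ∀ _ : Fin 2, T7) (s : T7) : (Function.update μ 0 s) 0 = s :=
  Function.update_self _ _ _
lemma upd0_1 (μ : ∀ _ : Fin 2, T7) (s : T7) : (Function.update μ 0 s) 1 = μ 1 :=
  Function.update_of_ne (by decide) _ _
lemma upd1_1 (μ : ∀ _ : Fin 2, T7) (s : T7) : (Function.update μ 1 s) 1 = s :=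
  Function.update_self _ _ _
lemma upd1_0 (μ : ∀ _ : Fin 2, T7) (s : T7) : (Function.update μ 1 s) 0 = μ 0 :=
  Function.update_of_ne (by decide) _ _

lemma mem_GR0 (G : ∀ _ : Fin 2, Set T7) (s : T7) :
    s ∈ GR p7 G 0 ↔ ∃ l : T7, l ∈ G 1 ∧ 0 ≤ (l:ℤ) ∧ ((s:ℤ) = -1 ∨ (s:ℤ) = (l:ℤ) + 1) := by
  constructor
  · rintro ⟨μ, hμ, hbr⟩
    refine ⟨μ 1, hμ 1 (by decide), ?_⟩
    refine (z1_br (μ 1) s (μ 1).2 s.2).mp ?_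
    intro s' hs'
    have := hbr ⟨s', hs'⟩
    rw [p7_zero, p7_zero, upd0_0, upd0_0, upd0_1, upd0_1] at this
    exact_mod_cast this
  · rintro ⟨l, hl, h0, hcase⟩
    refine ⟨fun _ => l, fun j hj => ?_, fun s' => ?_⟩
    · fin_cases j
      · exact absurd rfl hj
      · exact hl
    · rw [p7_zero, p7_zero, upd0_0, upd0_0, upd0_1, upd0_1]
      exact_mod_cast (z1_br (l:ℤ) s l.2 s.2).mpr ⟨h0, hcase⟩ (s':ℤ) s'.2

lemma mem_GR1 (G : ∀ _ : Fin 2, Set T7) (s : T7) :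
    s ∈ GR p7 G 1 ↔ ∃ k : T7, k ∈ G 0 ∧ 0 ≤ (k:ℤ) ∧ ((k:ℤ) = 0 ∨ (s:ℤ) = -1 ∨ (s:ℤ) = (k:ℤ)) := by
  constructor
  · rintro ⟨μ, hμ, hbr⟩
    refine ⟨μ 0, hμ 0 (by decide), ?_⟩
    refine (z2_br (μ 0) s (μ 0).2 s.2).mp ?_
    intro s' hs'
    have := hbr ⟨s', hs'⟩
    rw [p7_one, p7_one, upd1_1, upd1_1, upd1_0, upd1_0] at this
    exact_mod_cast this
  · rintro ⟨k, hk, h0, hcase⟩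
    refine ⟨fun _ => k, fun j hj => ?_, fun s' => ?_⟩
    · fin_cases j
      · exact hk
      · exact absurd rfl hj
    · rw [p7_one, p7_one, upd1_1, upd1_1, upd1_0, upd1_0]
      exact_mod_cast (z2_br (k:ℤ) s k.2 s.2).mpr ⟨h0, hcase⟩ (s':ℤ) s'.2

def A7 (m : ℕ) : Set T7 := {s | (s:ℤ) = -1 ∨ (m:ℤ) ≤ (s:ℤ)}

def Gab (a b : ℕ) : ∀ _ : Fin 2, Set T7 := fun i => if i = 0 then A7 a else A7 b

lemma mem_A7 (m : ℕ) (s : T7) : s ∈ A7 m ↔ ((s:ℤ) = -1 ∨ (m:ℤ) ≤ (s:ℤ)) := Iff.rfl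

lemma step7 (a b : ℕ) (hba : b ≤ a) (hab : a ≤ b + 1) :
    GR p7 (Gab a b) ⊓ Gab a b = Gab (b+1) a := by
  have hG0 : Gab a b 0 = A7 a := rfl
  have hG1 : Gab a b 1 = A7 b := rfl
  have h0 : (GR p7 (Gab a b) ⊓ Gab a b) 0 = Gab (b+1) a 0 := by
    show GR p7 (Gab a b) 0 ⊓ Gab a b 0 = A7 (b+1)
    ext s
    change s ∈ GR p7 (Gab a b) 0 ∧ s ∈ Gab a b 0 ↔ s ∈ A7 (b+1)
    rw [mem_GR0, hG0, hG1, mem_A7]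
    constructor
    · rintro ⟨⟨l, hl, h0, hcase⟩, hA⟩
      rw [mem_A7] at hl
      rw [mem_A7]
      push_cast at hl hcase ⊢
      omega
    · intro hA
      rw [mem_A7] at hA
      push_cast at hA
      constructor
      · rcases hA with h | h
        · exact ⟨⟨(b:ℤ), by omega⟩, Or.inr (by simp), by simp, Or.inl h⟩
        · refine ⟨⟨(s:ℤ) - 1, by omega⟩, Or.inr (by simp; omega), by simp; omega,
            Or.inr (by simp)⟩
      · omega
  have h1 : (GR p7 (Gab a b) ⊓ Gab a b) 1 = Gab (b+1) a 1 := by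
    show GR p7 (Gab a b) 1 ⊓ Gab a b 1 = A7 a
    ext s
    change s ∈ GR p7 (Gab a b) 1 ∧ s ∈ Gab a b 1 ↔ s ∈ A7 a
    rw [mem_GR1, hG0, hG1, mem_A7, mem_A7]
    have hs2 := s.2
    constructor
    · rintro ⟨⟨k, hk, h0, hcase⟩, hA⟩
      rw [mem_A7] at hk
      push_cast at *
      omega
    · intro hA
      push_cast at hA
      refine ⟨?_, by omega⟩
      rcases hA with h | h
      · exact ⟨⟨(a:ℤ), by omega⟩, Or.inr (by simp), by simp, Or.inr (Or.inl h)⟩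
      · exact ⟨s, Or.inr h, by omega, Or.inr (Or.inr rfl)⟩
  funext i
  fin_cases i
  exacts [h0, h1]

section IterLemmas
variable {D : Type} [CompleteLattice D] (F : D → D)

lemma iterate_zero : iterate F 0 = ⊤ := Ordinal.limitRecOn_zero _ _ _

lemma iterate_succ (α : Ordinal.{0}) : iterate F (α + 1) = F (iterate F α) :=
  Ordinal.limitRecOn_succ _ _ _ _

lemma iterate_limit (β : Ordinal.{0}) (h : Order.IsSuccLimit β) :
    iterate F β = ⨅ (γ : Ordinal) (_ : γ < β), iterate F γ :=
  Ordinal.limitRecOn_limit _ _ _ _ h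

end IterLemmas

lemma iterate_nat (n : ℕ) :
    iterate (fun G => GR p7 G ⊓ G) (n : Ordinal) = Gab ((n+1)/2) (n/2) := by
  induction n with
  | zero =>
    rw [Nat.cast_zero, iterate_zero]
    funext i
    have : A7 0 = (⊤ : Set T7) := by
      ext s; simp [A7]; have := s.2; omega
    fin_cases i <;> simp [Gab, this] <;> rfl
  | succ n ih =>
    have hc : ((n+1 : ℕ) : Ordinal) = (n : Ordinal) + 1 := by push_cast; ring
    rw [hc, iterate_succ, ih, step7 _ _ (by omega) (by omega)]
    have e1 : n/2 + 1 = (n+1+1)/2 := by omega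
    rw [e1]

def Sfin : ∀ _ : Fin 2, Set T7 := fun _ => {s : T7 | (s : ℤ) = -1}

lemma iterate_omega :
    iterate (fun G => GR p7 G ⊓ G) Ordinal.omega0 = Sfin := by
  rw [iterate_limit _ _ Ordinal.isSuccLimit_omega0]
  apply le_antisymm
  · intro i s hs
    by_contra hne
    have hs2 := s.2
    have hpos : 0 ≤ (s : ℤ) := by
      rcases lt_or_ge (s:ℤ) 0 with h | h
      · exact absurd (by omega : (s:ℤ) = -1) hne
      · exact h
    set m : ℕ := (s : ℤ).toNat with hm
    have hle : (⨅ (γ : Ordinal) (_ : γ < Ordinal.omega0), iterate (fun G => GR p7 G ⊓ G) γ)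
        ≤ iterate (fun G => GR p7 G ⊓ G) ((2*m+2 : ℕ) : Ordinal) :=
      le_trans (iInf_le _ _) (iInf_le _ (Ordinal.nat_lt_omega0 _))
    have hmem : s ∈ iterate (fun G => GR p7 G ⊓ G) ((2*m+2 : ℕ) : Ordinal) i := hle i hs
    rw [iterate_nat] at hmem
    have e1 : (2*m+2+1)/2 = m+1 := by omega
    have e2 : (2*m+2)/2 = m+1 := by omega
    rw [e1, e2] at hmem
    have hA : s ∈ A7 (m+1) := by fin_cases i <;> exact hmem
    rw [mem_A7] at hA
    push_cast at hA
    omega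
  · apply le_iInf; intro γ; apply le_iInf; intro hγ
    obtain ⟨k, rfl⟩ := Ordinal.lt_omega0.mp hγ
    rw [iterate_nat]
    intro i s hs
    have : (s:ℤ) = -1 := hs
    fin_cases i <;> exact Or.inl this

lemma iterate_omega_succ :
    iterate (fun G => GR p7 G ⊓ G) (Ordinal.omega0 + 1) = ⊥ := by
  rw [iterate_succ, iterate_omega]
  funext i
  have h0 : (GR p7 Sfin ⊓ Sfin) 0 = (⊥ : Set T7) := by
    ext s
    simp only [Set.bot_eq_empty, Set.mem_empty_iff_false, iff_false]
    rintro ⟨hgr, _⟩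
    obtain ⟨l, hl, h0l, _⟩ := (mem_GR0 Sfin s).mp hgr
    have : (l:ℤ) = -1 := hl
    omega
  have h1 : (GR p7 Sfin ⊓ Sfin) 1 = (⊥ : Set T7) := by
    ext s
    simp only [Set.bot_eq_empty, Set.mem_empty_iff_false, iff_false]
    rintro ⟨hgr, _⟩
    obtain ⟨k, hk, h0k, _⟩ := (mem_GR1 Sfin s).mp hgr
    have : (k:ℤ) = -1 := hk
    omega
  fin_cases i
  exacts [h0, h1]

lemma A7_inj {j m : ℕ} (h : A7 j = A7 m) : j = m := by
  have hj : (⟨(j:ℤ), by omega⟩ : T7) ∈ A7 j := Or.inr (le_refl _)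
  have hm : (⟨(m:ℤ), by omega⟩ : T7) ∈ A7 m := Or.inr (le_refl _)
  rw [h] at hj; rw [← h] at hm
  rcases hj with h' | h' <;> rcases hm with h'' | h'' <;> simp at h' h'' <;> omega

lemma iterate_strict : ∀ α ≤ Ordinal.omega0,
    iterate (fun G => GR p7 G ⊓ G) (α + 1) ≠ iterate (fun G => GR p7 G ⊓ G) α := by
  intro α hα
  rcases eq_or_lt_of_le hα with rfl | hlt
  · rw [iterate_omega_succ, iterate_omega]
    intro h
    have : (⟨-1, le_refl _⟩ : T7) ∈ Sfin 0 := rfl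
    rw [← h] at this
    exact this
  · obtain ⟨n, rfl⟩ := Ordinal.lt_omega0.mp hlt
    have hc : ((n:Ordinal) + 1) = ((n+1 : ℕ) : Ordinal) := by push_cast; ring
    rw [hc, iterate_nat, iterate_nat]
    intro h
    have h0 := congrFun h 0
    have h1 := congrFun h 1
    have e0 : A7 ((n+1+1)/2) = A7 ((n+1)/2) := h0
    have e1 : A7 ((n+1)/2) = A7 (n/2) := h1
    have := A7_inj e0
    have := A7_inj e1
    omega

theorem stmt_7 :
    iterate (fun G => GR p7 G ⊓ G) Ordinal.omega0
        = (fun _ : Fin 2 => {s : {k : ℤ // -1 ≤ k} | (s : ℤ) = -1}) ∧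
    iterate (fun G => GR p7 G ⊓ G) (Ordinal.omega0 + 1) = ⊥ ∧
    ∀ α ≤ Ordinal.omega0,
      iterate (fun G => GR p7 G ⊓ G) (α + 1) ≠ iterate (fun G => GR p7 G ⊓ G) α := by
  exact ⟨iterate_omega, iterate_omega_succ, iterate_strict⟩
end

section
/- Let H be a strategic game with the pure belief structure satisfying property B, and let R be any relaxation of LR̄. Then for every ordinal α, every player i, every opponent belief μ for i in R^α, and every s_i : T i: if s_i is a best response to μ in R^α, then s_i is a best response to μ in H. -/
universe u

set_option linter.unusedVariables false

theorem stmt_8 {n : ℕ} (hn : 2 ≤ n) {T : Fin n → Type u} [∀ i, Nonempty (T i)]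
    (p : ∀ i : Fin n, (∀ j, T j) → ℝ) (hB : PropB p)
    (R : (∀ i, Set (T i)) → (∀ i, Set (T i)))
    (hR : Relaxation (fun G => LR p G ⊓ G) R) :
    ∀ (α : Ordinal.{0}) (i : Fin n) (μ : ∀ j, T j),
      (∀ j, j ≠ i → μ j ∈ iterate R α j) →
      ∀ s : T i,
        (∀ s' ∈ iterate R α i, p i (Function.update μ i s') ≤ p i (Function.update μ i s)) →
        ∀ s' : T i, p i (Function.update μ i s') ≤ p i (Function.update μ i s) := by
  -- Key claim: global best responses to beliefs in `iterate R α` belong to `iterate R α`.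
  have key : ∀ α : Ordinal.{0}, ∀ (i : Fin n) (μ : ∀ j, T j),
      (∀ j, j ≠ i → μ j ∈ iterate R α j) →
      ∀ s : T i, (∀ s' : T i, p i (Function.update μ i s') ≤ p i (Function.update μ i s)) →
      s ∈ iterate R α i := by
    intro α
    induction α using Ordinal.limitRecOn with
    | zero => intro i μ _ s _; simp [iterate]
    | add_one α ih =>
      intro i μ hμ s hs
      have hstep : iterate R (α + 1) = R (iterate R α) := by
        simp [iterate, Ordinal.limitRecOn_succ]
      have hle : R (iterate R α) ≤ iterate R α := (hR α).2.1 inf_le_right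
      have hμ' : ∀ j, j ≠ i → μ j ∈ iterate R α j := fun j hj => by
        have h1 := hμ j hj
        rw [hstep] at h1
        exact hle j h1
      have hsα : s ∈ iterate R α i := ih i μ hμ' s hs
      have hsLR : s ∈ LR p (iterate R α) i := ⟨μ, hμ', fun s' _ => hs s'⟩
      have hmem : s ∈ (LR p (iterate R α) ⊓ iterate R α) i := ⟨hsLR, hsα⟩
      rw [hstep]
      exact (hR α).1 i hmem
    | limit β hβ ih =>
      intro i μ hμ s hs
      have hlim : iterate R β = ⨅ (γ : Ordinal) (_ : γ < β), iterate R γ := by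
        simp only [iterate, Ordinal.limitRecOn_limit _ _ _ _ hβ]
      rw [hlim]
      simp only [iInf_apply, Set.iInf_eq_iInter, Set.mem_iInter]
      intro γ hγ
      refine ih γ hγ i μ (fun j hj => ?_) s hs
      have h1 := hμ j hj
      rw [hlim] at h1
      simp only [iInf_apply, Set.iInf_eq_iInter, Set.mem_iInter] at h1
      exact h1 γ hγ
  intro α i μ hμ s hs s'
  obtain ⟨sb, hsb⟩ := hB i μ
  exact le_trans (hsb s') (hs sb (key α i μ hμ sb hsb))
end

section
/- Let H be a strategic game with the pure belief structure satisfying property B. Then LR̄ is order independent: if R is any relaxation of LR̄ and α is an ordinal with R^{α+1} = R^α, then R^α equals the greatest fixpoint of GR̄; in particular any two outcomes of relaxations of LR̄ coincide. -/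
universe u

set_option linter.unusedVariables false

/- Auxiliary lemmas -/

lemma my_iterate_zero {D : Type u} [CompleteLattice D] (R : D → D) : iterate R 0 = ⊤ :=
  Ordinal.limitRecOn_zero ..

lemma my_iterate_succ {D : Type u} [CompleteLattice D] (R : D → D) (α : Ordinal) :
    iterate R (α + 1) = R (iterate R α) := by
  rw [iterate, Ordinal.add_one_eq_succ, Ordinal.limitRecOn_succ]; rfl

lemma my_iterate_limit {D : Type u} [CompleteLattice D] (R : D → D) (β : Ordinal)
    (h : Order.IsSuccLimit β) :
    iterate R β = ⨅ (γ : Ordinal) (_ : γ < β), iterate R γ :=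
  Ordinal.limitRecOn_limit _ _ _ _ h

lemma my_iterate_anti {D : Type u} [CompleteLattice D] (R : D → D)
    (h : ∀ β, iterate R (β+1) ≤ iterate R β) :
    ∀ β α : Ordinal, α ≤ β → iterate R β ≤ iterate R α := by
  intro β
  induction β using Ordinal.limitRecOn with
  | zero => intro α hα; rw [nonpos_iff_eq_zero.mp hα]
  | add_one β ih =>
    intro α hα
    rcases lt_or_eq_of_le hα with hlt | rfl
    · rw [Order.lt_add_one_iff] at hlt
      refine le_trans ?_ (ih α hlt)
      exact h β
    · exact le_rfl
  | limit β hβ ih =>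
    intro α hα
    rcases lt_or_eq_of_le hα with hlt | rfl
    · rw [my_iterate_limit R β hβ]
      exact iInf₂_le α hlt
    · exact le_rfl

lemma my_GR_mono {n : ℕ} {T : Fin n → Type u} (p : ∀ i : Fin n, (∀ j, T j) → ℝ)
    {G G' : ∀ i, Set (T i)} (h : G ≤ G') : GR p G ≤ GR p G' := by
  intro i s hs
  obtain ⟨μ, hμ, hbr⟩ := hs
  exact ⟨μ, fun j hj => h j (hμ j hj), hbr⟩

lemma my_GR_le_LR {n : ℕ} {T : Fin n → Type u} (p : ∀ i : Fin n, (∀ j, T j) → ℝ)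
    (G : ∀ i, Set (T i)) : GR p G ≤ LR p G := by
  intro i s hs
  obtain ⟨μ, hμ, hbr⟩ := hs
  exact ⟨μ, hμ, fun s' _ => hbr s'⟩

theorem stmt_10 {n : ℕ} (hn : 2 ≤ n) {T : Fin n → Type u} [∀ i, Nonempty (T i)]
    (p : ∀ i : Fin n, (∀ j, T j) → ℝ) (hB : PropB p) :
    ∀ R, Relaxation (fun G => LR p G ⊓ G) R →
      ∀ α : Ordinal.{0}, iterate R (α + 1) = iterate R α →
        IsGreatest {G : ∀ i, Set (T i) | GR p G ⊓ G = G} (iterate R α) := by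
  intro R hRel α hfix
  have hcontr : ∀ β, iterate R (β+1) ≤ iterate R β := by
    intro β
    rw [my_iterate_succ]
    exact (hRel β).2.1 inf_le_right
  have hanti := my_iterate_anti R hcontr
  rw [my_iterate_succ] at hfix
  have hFfix : LR p (iterate R α) ⊓ iterate R α = iterate R α := (hRel α).2.2 hfix
  have hsub : iterate R α ≤ LR p (iterate R α) := hFfix.symm.trans_le inf_le_left
  -- key: any best response (in the full game) to a belief in `iterate R α`
  -- belongs to every iterate
  have key : ∀ (i : Fin n) (μ : ∀ j, T j), (∀ j, j ≠ i → μ j ∈ iterate R α j) →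
      ∀ (t : T i), (∀ s' : T i, p i (Function.update μ i s') ≤ p i (Function.update μ i t)) →
      ∀ β, β ≤ α → t ∈ iterate R β i := by
    intro i μ hμ t ht β
    induction β using Ordinal.limitRecOn with
    | zero => intro _; rw [my_iterate_zero]; trivial
    | add_one β ih =>
      intro hβ
      have hβ' : β ≤ α := le_of_lt ((lt_add_one β).trans_le hβ)
      have hIH := ih hβ'
      have hμβ : ∀ j, j ≠ i → μ j ∈ iterate R β j := fun j hj => hanti α β hβ' j (hμ j hj)
      rw [my_iterate_succ]
      exact (hRel β).1 i ⟨⟨μ, hμβ, fun s' _ => ht s'⟩, hIH⟩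
    | limit β hβ ih =>
      intro hβα
      rw [my_iterate_limit R β hβ]
      simp only [iInf_apply, Set.iInf_eq_iInter, Set.mem_iInter]
      intro γ hγ
      exact ih γ hγ (le_of_lt (hγ.trans_le hβα))
  have hGRfix : GR p (iterate R α) ⊓ iterate R α = iterate R α := by
    apply le_antisymm inf_le_right
    refine le_inf ?_ le_rfl
    intro i s hs
    obtain ⟨μ, hμ, hbr⟩ := hsub i hs
    obtain ⟨t, ht⟩ := hB i μ
    have htα : t ∈ iterate R α i := key i μ hμ t ht α le_rfl
    exact ⟨μ, hμ, fun s' => (ht s').trans (hbr t htα)⟩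
  constructor
  · exact hGRfix
  · intro G hG
    have hall : ∀ β, G ≤ iterate R β := by
      intro β
      induction β using Ordinal.limitRecOn with
      | zero => rw [my_iterate_zero]; exact le_top
      | add_one β ih =>
        rw [my_iterate_succ]
        calc G = GR p G ⊓ G := hG.symm
          _ ≤ LR p (iterate R β) ⊓ iterate R β :=
              inf_le_inf (le_trans (my_GR_mono p ih) (my_GR_le_LR p _)) ih
          _ ≤ R (iterate R β) := (hRel β).1
      | limit β hβ ih =>
        rw [my_iterate_limit R β hβ]
        exact le_iInf fun γ => le_iInf fun hγ => ih γ hγ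
    exact hall α
end

section
/- Let H be a strategic game and assume property D(α) holds for all ordinals α. Then LS̄ is order independent: if R is any relaxation of LS̄ and α is an ordinal with R^{α+1} = R^α, then R^α equals the greatest fixpoint of GS̄; in particular any two outcomes of relaxations of LS̄ coincide. -/
universe u

set_option linter.unusedVariables false

theorem stmt_16 {n : ℕ} (hn : 2 ≤ n) {T : Fin n → Type u} [∀ i, Nonempty (T i)]
    (p : ∀ i : Fin n, (∀ j, T j) → ℝ) (hD : ∀ α : Ordinal.{0}, PropD p α) :
    ∀ R, Relaxation (fun G => LS p G ⊓ G) R →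
      ∀ α : Ordinal.{0}, iterate R (α + 1) = iterate R α →
        IsGreatest {G : ∀ i, Set (T i) | GS p G ⊓ G = G} (iterate R α) := by
  intro R hR α hα
  have hstep : iterate R (α + 1) = R (iterate R α) :=
    Ordinal.limitRecOn_succ _ _ _ _
  rw [hstep] at hα
  have hF : LS p (iterate R α) ⊓ iterate R α = iterate R α := (hR α).2.2 hα
  have hLS : iterate R α ≤ LS p (iterate R α) := hF.symm.le.trans inf_le_left
  constructor
  · show GS p (iterate R α) ⊓ iterate R α = iterate R α
    refine le_antisymm inf_le_right (le_inf ?_ le_rfl)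
    intro i s hs hex
    obtain ⟨s'', hs''mem, hs''dom⟩ := hD α R hR i s hex
    exact hLS i hs ⟨s'', hs''mem, hs''dom⟩
  · intro G hG
    have key : ∀ β : Ordinal.{0}, G ≤ iterate R β := by
      intro β
      induction β using Ordinal.limitRecOn with
      | zero =>
        rw [show iterate R 0 = ⊤ from Ordinal.limitRecOn_zero _ _ _]
        exact le_top
      | add_one β ih =>
        rw [show iterate R (β + 1) = R (iterate R β) from
          Ordinal.limitRecOn_succ _ _ _ _]
        refine le_trans (le_inf ?_ ih) (hR β).1
        intro i s hs hex
        obtain ⟨s', _, hdom⟩ := hex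
        have hsGS : s ∈ GS p G i := by
          have := congrFun hG i
          exact (this ▸ hs : s ∈ (GS p G ⊓ G) i).1
        exact hsGS ⟨s', fun μ hμ => hdom μ fun j hj => ih j (hμ j hj)⟩
      | limit β hβ ih =>
        rw [show iterate R β = ⨅ (γ : Ordinal) (_ : γ < β), iterate R γ from
          Ordinal.limitRecOn_limit _ _ _ _ hβ]
        exact le_iInf fun γ => le_iInf fun hγ => ih γ hγ
    exact key α
end
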